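/- Let N ≥ 1 and let C : Matrix (Fin N) (Fin N) ℝ be column-stochastic (all entries nonnegative and every column sums to 1) and primitive, i.e., there exists m such that all entries of C^m are strictly positive. Let x0, y0 : Fin N → ℝ with ∑_j y0 j > 0. Then for every index j, the ratio (C^k *ᵥ x0) j / (C^k *ᵥ y0) j tends to (∑_j x0 j) / (∑_j y0 j) as k → ∞ (the ratio-consensus convergence result for column-stochastic primitive matrices invoked in the proof of Theorem 2). -/
import Mathlib
open Filter Matrix

lemma colsum_pow {N : ℕ} {C : Matrix (Fin N) (Fin N) ℝ} (hcol : ∀ i, ∑ j, C j i = 1) :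
    ∀ (m : ℕ) (i : Fin N), ∑ l, (C ^ m) l i = 1 := by
  intro m
  induction m with
  | zero => intro i; simp [Matrix.one_apply]
  | succ n ih =>
      intro i
      rw [pow_succ]
      simp only [Matrix.mul_apply]
      rw [Finset.sum_comm]
      simp_rw [← Finset.sum_mul, ih, one_mul]
      exact hcol i

lemma entry_pow_nonneg {N : ℕ} {C : Matrix (Fin N) (Fin N) ℝ} (h : ∀ i j, 0 ≤ C i j) :
    ∀ (m : ℕ) (i j : Fin N), 0 ≤ (C ^ m) i j := by
  intro m
  induction m with
  | zero => intro i j; rw [pow_zero]; by_cases hij : i = j <;> simp [Matrix.one_apply, hij]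
  | succ n ih =>
      intro i j
      rw [pow_succ, Matrix.mul_apply]
      exact Finset.sum_nonneg fun l _ => mul_nonneg (ih i l) (h l j)

lemma sup_row_le {N : ℕ} (hne : (Finset.univ : Finset (Fin N)).Nonempty)
    (M : Matrix (Fin N) (Fin N) ℝ) (δ : ℝ) (h0 : 0 ≤ δ)
    (hδ : ∀ l i, δ ≤ M l i) (hcolM : ∀ i, ∑ l, M l i = 1) (v : Fin N → ℝ) (i : Fin N) :
    ∑ l, v l * M l i ≤ Finset.univ.sup' hne v
      - δ * (Finset.univ.sup' hne v - Finset.univ.inf' hne v) := by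
  obtain ⟨j0, -, hj0⟩ := Finset.exists_mem_eq_inf' hne v
  set s := Finset.univ.sup' hne v with hs
  set t := Finset.univ.inf' hne v with ht
  have hts : t ≤ s := le_of_eq_of_le hj0 (Finset.le_sup' v (Finset.mem_univ j0))
  have step : ∀ l, v l * M l i ≤ s * M l i - (if l = j0 then (s - t) * M l i else 0) := by
    intro l
    by_cases h : l = j0
    · rw [if_pos h, h, ← hj0]
      have e : s * M j0 i - (s - t) * M j0 i = t * M j0 i := by ring
      rw [e]
    · rw [if_neg h]
      have h1 : v l ≤ s := Finset.le_sup' v (Finset.mem_univ l)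
      have h2 : (0:ℝ) ≤ M l i := le_trans h0 (hδ l i)
      nlinarith
  calc ∑ l, v l * M l i
      ≤ ∑ l, (s * M l i - (if l = j0 then (s - t) * M l i else 0)) :=
        Finset.sum_le_sum fun l _ => step l
    _ = s * (∑ l, M l i) - (s - t) * M j0 i := by
        rw [Finset.sum_sub_distrib, ← Finset.mul_sum, Finset.sum_ite_eq' Finset.univ j0]
        simp
    _ = s - (s - t) * M j0 i := by rw [hcolM i, mul_one]
    _ ≤ s - δ * (s - t) := by nlinarith [hδ j0 i]

lemma inf_row_ge {N : ℕ} (hne : (Finset.univ : Finset (Fin N)).Nonempty)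
    (M : Matrix (Fin N) (Fin N) ℝ) (δ : ℝ) (h0 : 0 ≤ δ)
    (hδ : ∀ l i, δ ≤ M l i) (hcolM : ∀ i, ∑ l, M l i = 1) (v : Fin N → ℝ) (i : Fin N) :
    Finset.univ.inf' hne v
      + δ * (Finset.univ.sup' hne v - Finset.univ.inf' hne v) ≤ ∑ l, v l * M l i := by
  obtain ⟨j1, -, hj1⟩ := Finset.exists_mem_eq_sup' hne v
  set s := Finset.univ.sup' hne v with hs
  set t := Finset.univ.inf' hne v with ht
  have hts : t ≤ s := le_of_le_of_eq (Finset.inf'_le v (Finset.mem_univ j1)) hj1.symm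
  have step : ∀ l, t * M l i + (if l = j1 then (s - t) * M l i else 0) ≤ v l * M l i := by
    intro l
    by_cases h : l = j1
    · rw [if_pos h, h, ← hj1]
      have e : t * M j1 i + (s - t) * M j1 i = s * M j1 i := by ring
      rw [e]
    · rw [if_neg h]
      have h1 : t ≤ v l := Finset.inf'_le v (Finset.mem_univ l)
      have h2 : (0:ℝ) ≤ M l i := le_trans h0 (hδ l i)
      nlinarith
  calc t + δ * (s - t)
      ≤ t + (s - t) * M j1 i := by nlinarith [hδ j1 i]
    _ = t * (∑ l, M l i) + (s - t) * M j1 i := by rw [hcolM i, mul_one]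
    _ = ∑ l, (t * M l i + (if l = j1 then (s - t) * M l i else 0)) := by
        rw [Finset.sum_add_distrib, ← Finset.mul_sum, Finset.sum_ite_eq' Finset.univ j1]
        simp
    _ ≤ ∑ l, v l * M l i := Finset.sum_le_sum fun l _ => step l

lemma osc_contraction {N : ℕ} (hne : (Finset.univ : Finset (Fin N)).Nonempty)
    (M : Matrix (Fin N) (Fin N) ℝ) (δ : ℝ) (h0 : 0 ≤ δ)
    (hδ : ∀ l i, δ ≤ M l i) (hcolM : ∀ i, ∑ l, M l i = 1) (v : Fin N → ℝ) :
    Finset.univ.sup' hne (fun i => ∑ l, v l * M l i)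
      - Finset.univ.inf' hne (fun i => ∑ l, v l * M l i)
    ≤ (1 - 2*δ) * (Finset.univ.sup' hne v - Finset.univ.inf' hne v) := by
  have h1 : Finset.univ.sup' hne (fun i => ∑ l, v l * M l i)
      ≤ Finset.univ.sup' hne v
        - δ * (Finset.univ.sup' hne v - Finset.univ.inf' hne v) :=
    Finset.sup'_le hne _ fun i _ => sup_row_le hne M δ h0 hδ hcolM v i
  have h2 : Finset.univ.inf' hne v
        + δ * (Finset.univ.sup' hne v - Finset.univ.inf' hne v)
      ≤ Finset.univ.inf' hne (fun i => ∑ l, v l * M l i) :=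
    Finset.le_inf' hne _ fun i _ => inf_row_ge hne M δ h0 hδ hcolM v i
  linarith

/-- Ratio-consensus convergence for column-stochastic primitive matrices,
as invoked in the proof of Theorem 2 of the OpenRC paper: every entry of the
ratio of the two linear iterations converges to the ratio of the initial sums. -/
theorem ratio_consensus_convergence {N : ℕ} (hN : 1 ≤ N)
    (C : Matrix (Fin N) (Fin N) ℝ)
    (hnonneg : ∀ i j, 0 ≤ C i j)
    (hcol : ∀ i, ∑ j, C j i = 1)
    (hprim : ∃ m, ∀ i j, 0 < (C ^ m) i j)
    (x0 y0 : Fin N → ℝ)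
    (hy0 : 0 < ∑ j, y0 j) :
    ∀ j, Tendsto (fun k => (C ^ k *ᵥ x0) j / (C ^ k *ᵥ y0) j)
      atTop (nhds ((∑ j, x0 j) / (∑ j, y0 j))) := by
  have hne : (Finset.univ : Finset (Fin N)).Nonempty :=
    ⟨⟨0, by omega⟩, Finset.mem_univ _⟩
  obtain ⟨m, hm1, hmpos⟩ : ∃ m, 1 ≤ m ∧ ∀ i j, 0 < (C ^ m) i j := by
    obtain ⟨m0, hm0⟩ := hprim
    rcases Nat.eq_zero_or_pos m0 with h | h
    · subst h
      have hone : ∀ i j : Fin N, 0 < (1 : Matrix (Fin N) (Fin N) ℝ) i j := by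
        simpa using hm0
      have hall : ∀ a b : Fin N, a = b := by
        intro a b; by_contra hab
        have h2 := hone a b
        rw [Matrix.one_apply_ne hab] at h2
        exact lt_irrefl 0 h2
      refine ⟨1, le_refl 1, fun i j' => ?_⟩
      rw [pow_one]
      have hsum := hcol j'
      have he : ∑ l, C l j' = C i j' :=
        Fintype.sum_eq_single i (fun b hb => absurd (hall b i) hb)
      rw [he] at hsum
      rw [hsum]; exact one_pos
    · exact ⟨m0, h, hm0⟩
  obtain ⟨p, -, hp⟩ := Finset.exists_min_image (Finset.univ : Finset (Fin N × Fin N))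
      (fun q => (C ^ m) q.1 q.2) ⟨(hne.choose, hne.choose), Finset.mem_univ _⟩
  set δ := (C ^ m) p.1 p.2 with hδdef
  have hδpos : 0 < δ := hmpos p.1 p.2
  have hδle : ∀ l i, δ ≤ (C ^ m) l i := fun l i => hp (l, i) (Finset.mem_univ _)
  intro j
  set g : ℕ → Fin N → ℝ := fun k i => (C ^ k) j i with hgdef
  set ε : ℕ → ℝ := fun k => Finset.univ.sup' hne (g k) - Finset.univ.inf' hne (g k)
    with hεdef
  have hεnn : ∀ k, 0 ≤ ε k := fun k => sub_nonneg.2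
    (le_trans (Finset.inf'_le _ (Finset.mem_univ hne.choose))
      (Finset.le_sup' _ (Finset.mem_univ hne.choose)))
  have hsucc : ∀ k, g (k+1) = fun i => ∑ l, g k l * C l i := by
    intro k; funext i
    simp only [hgdef, pow_succ, Matrix.mul_apply]
  have hstepm : ∀ k, g (k+m) = fun i => ∑ l, g k l * (C ^ m) l i := by
    intro k; funext i
    simp only [hgdef, pow_add, Matrix.mul_apply]
  have hmono : Antitone ε := by
    apply antitone_nat_of_succ_le
    intro k
    have h := osc_contraction hne C 0 le_rfl (fun l i => hnonneg l i) hcol (g k)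
    have e : ε (k+1) = Finset.univ.sup' hne (fun i => ∑ l, g k l * C l i)
        - Finset.univ.inf' hne (fun i => ∑ l, g k l * C l i) := by
      simp only [hεdef, hsucc k]
    rw [e]
    simpa using h
  set r := max (1 - 2*δ) 0 with hrdef
  have hr0 : (0:ℝ) ≤ r := le_max_right _ _
  have hr1 : r < 1 := max_lt (by linarith) one_pos
  have hcolm := colsum_pow hcol m
  have hcontr : ∀ k, ε (k+m) ≤ r * ε k := by
    intro k
    have h := osc_contraction hne (C^m) δ hδpos.le hδle hcolm (g k)
    have e : ε (k+m) = Finset.univ.sup' hne (fun i => ∑ l, g k l * (C^m) l i)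
        - Finset.univ.inf' hne (fun i => ∑ l, g k l * (C^m) l i) := by
      simp only [hεdef, hstepm k]
    rw [e]
    exact h.trans (mul_le_mul_of_nonneg_right (le_max_left _ _) (hεnn k))
  have hgeo : ∀ n, ε (n*m) ≤ r^n * ε 0 := by
    intro n; induction n with
    | zero => simp
    | succ n ih =>
        have e : (n+1)*m = n*m + m := by ring
        rw [e, pow_succ]
        calc ε (n*m + m) ≤ r * ε (n*m) := hcontr _
          _ ≤ r * (r^n * ε 0) := mul_le_mul_of_nonneg_left ih hr0
          _ = r^n * r * ε 0 := by ring
  have hεlim : Tendsto ε atTop (nhds 0) := by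
    have hdiv : Tendsto (fun k => k / m) atTop atTop := by
      apply Filter.tendsto_atTop_atTop.2
      intro b
      exact ⟨m * b, fun a ha => (Nat.le_div_iff_mul_le (by omega)).2 (by rw [Nat.mul_comm]; exact ha)⟩
    have hpow : Tendsto (fun k : ℕ => r ^ (k / m) * ε 0) atTop (nhds 0) := by
      have h := (tendsto_pow_atTop_nhds_zero_of_lt_one hr0 hr1).comp hdiv
      simpa using h.mul_const (ε 0)
    refine squeeze_zero hεnn (fun k => ?_) hpow
    calc ε k ≤ ε (k / m * m) := hmono (Nat.div_mul_le_self k m)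
      _ ≤ r ^ (k/m) * ε 0 := hgeo _
  have hlow : ∀ k, m ≤ k → ∀ i, δ ≤ g k i := by
    intro k hk i
    have hk' : k = m + (k - m) := by omega
    have e : g k i = ∑ l, (C ^ m) j l * (C ^ (k - m)) l i := by
      simp only [hgdef]
      conv_lhs => rw [hk']
      rw [pow_add, Matrix.mul_apply]
    rw [e]
    calc δ = δ * ∑ l, (C ^ (k-m)) l i := by rw [colsum_pow hcol, mul_one]
      _ = ∑ l, δ * (C ^ (k-m)) l i := Finset.mul_sum _ _ _
      _ ≤ ∑ l, (C^m) j l * (C^(k-m)) l i :=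
          Finset.sum_le_sum fun l _ =>
            mul_le_mul_of_nonneg_right (hδle j l) (entry_pow_nonneg hnonneg _ l i)
  have habs : ∀ (k : ℕ) (x : Fin N → ℝ),
      |(∑ i, g k i * x i) - Finset.univ.inf' hne (g k) * ∑ i, x i|
        ≤ ε k * ∑ i, |x i| := by
    intro k x
    have e : (∑ i, g k i * x i) - Finset.univ.inf' hne (g k) * ∑ i, x i
        = ∑ i, (g k i - Finset.univ.inf' hne (g k)) * x i := by
      rw [Finset.mul_sum, ← Finset.sum_sub_distrib]
      simp [sub_mul]
    rw [e]
    refine (Finset.abs_sum_le_sum_abs _ _).trans ?_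
    rw [Finset.mul_sum]
    refine Finset.sum_le_sum fun i _ => ?_
    rw [abs_mul]
    refine mul_le_mul_of_nonneg_right ?_ (abs_nonneg _)
    have h1 : Finset.univ.inf' hne (g k) ≤ g k i := Finset.inf'_le _ (Finset.mem_univ i)
    have h2 : g k i ≤ Finset.univ.sup' hne (g k) := Finset.le_sup' _ (Finset.mem_univ i)
    rw [abs_of_nonneg (by linarith)]
    simp only [hεdef]; linarith
  have hmv : ∀ (k : ℕ) (x : Fin N → ℝ), (C ^ k *ᵥ x) j = ∑ i, g k i * x i := by
    intro k x; simp [Matrix.mulVec, dotProduct, hgdef]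
  have hT : (0:ℝ) < ∑ i, y0 i := hy0
  have hMx0 : (0:ℝ) ≤ ∑ i, |x0 i| := Finset.sum_nonneg fun i _ => abs_nonneg _
  have hMy0 : (0:ℝ) ≤ ∑ i, |y0 i| := Finset.sum_nonneg fun i _ => abs_nonneg _
  have hev2 : ∀ᶠ k in atTop, ε k * (∑ i, |y0 i|) < δ * (∑ i, y0 i) / 2 := by
    have h := hεlim.mul_const (∑ i, |y0 i|)
    rw [zero_mul] at h
    exact h.eventually_lt_const (div_pos (mul_pos hδpos hT) two_pos)
  rw [← tendsto_sub_nhds_zero_iff]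
  refine squeeze_zero_norm' (a := fun k => ε k *
      (((∑ i, y0 i) * (∑ i, |x0 i|) + |∑ i, x0 i| * (∑ i, |y0 i|))
        / (δ * (∑ i, y0 i) / 2 * (∑ i, y0 i)))) ?_ ?_
  · filter_upwards [eventually_ge_atTop m, hev2] with k hk hk2
    clear_value δ g ε r
    have hμδ : δ ≤ Finset.univ.inf' hne (g k) :=
      Finset.le_inf' hne _ fun i _ => hlow k hk i
    have hu := habs k x0
    have hw := habs k y0
    have hu1 := (abs_le.1 hu).1
    have hu2 := (abs_le.1 hu).2
    have hw1 := (abs_le.1 hw).1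
    have hw2 := (abs_le.1 hw).2
    have hμT : δ * (∑ i, y0 i) ≤ Finset.univ.inf' hne (g k) * (∑ i, y0 i) :=
      mul_le_mul_of_nonneg_right hμδ hT.le
    have hhalf : (0:ℝ) < δ * (∑ i, y0 i) / 2 := div_pos (mul_pos hδpos hT) two_pos
    have hwlb : δ * (∑ i, y0 i) / 2 ≤ ∑ i, g k i * y0 i := by
      linarith [hw1, hμT, hk2]
    have hwpos : (0:ℝ) < ∑ i, g k i * y0 i := lt_of_lt_of_le hhalf hwlb
    rw [Real.norm_eq_abs, hmv k x0, hmv k y0,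
      div_sub_div _ _ (ne_of_gt hwpos) (ne_of_gt hT), abs_div,
      abs_of_pos (mul_pos hwpos hT)]
    have hnum : |(∑ i, g k i * x0 i) * (∑ i, y0 i)
          - (∑ i, g k i * y0 i) * (∑ i, x0 i)|
        ≤ ε k * ((∑ i, y0 i) * (∑ i, |x0 i|) + |∑ i, x0 i| * (∑ i, |y0 i|)) := by
      have e : (∑ i, g k i * x0 i) * (∑ i, y0 i)
            - (∑ i, g k i * y0 i) * (∑ i, x0 i)
          = ((∑ i, g k i * x0 i) - Finset.univ.inf' hne (g k) * ∑ i, x0 i)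
              * (∑ i, y0 i)
            - ((∑ i, g k i * y0 i) - Finset.univ.inf' hne (g k) * ∑ i, y0 i)
              * (∑ i, x0 i) := by ring
      rw [e]
      have tri : ∀ X Y : ℝ, |X - Y| ≤ |X| + |Y| := fun X Y => by
        rw [sub_eq_add_neg]
        exact (abs_add_le _ _).trans_eq (by rw [abs_neg])
      refine (tri _ _).trans ?_
      rw [abs_mul, abs_mul, abs_of_pos hT]
      have hSx : |∑ i, x0 i| ≥ 0 := abs_nonneg _
      nlinarith [mul_le_mul_of_nonneg_right hu hT.le,
        mul_le_mul_of_nonneg_right hw (abs_nonneg (∑ i, x0 i))]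
    have hfin := div_le_div₀
      (mul_nonneg (hεnn k) (add_nonneg (mul_nonneg hT.le hMx0)
        (mul_nonneg (abs_nonneg _) hMy0)))
      hnum (mul_pos hhalf hT)
      (mul_le_mul_of_nonneg_right hwlb hT.le)
    refine hfin.trans (le_of_eq ?_)
    ring
  · have h := hεlim.mul_const
      (((∑ i, y0 i) * (∑ i, |x0 i|) + |∑ i, x0 i| * (∑ i, |y0 i|))
        / (δ * (∑ i, y0 i) / 2 * (∑ i, y0 i)))
    simpa using h
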